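/- Comparison supersolution for the discrete transport hierarchy: Let N ≥ 2, c ≥ 0, and let z^k : [0,∞) → ℝ_{≥0}, k ∈ [N], be C^1 functions satisfying, for all t ≥ 0 and k ≤ N/2, d z^k/dt ≤ c z^k + c k (z^{k+1} − z^k) + c k^β/N^2 + c/N^2, with z^k(0) ≤ C0' k^2/N^2 for k ≤ N/2 and z^k(t) ≤ C1 e^{c t} N^{β−2} for k > N/2, where β ≥ 2 is an integer and C0', C1 ≥ 0. Then there exists M > 0 depending only on β, c, C0', C1 such that z^k(t) ≤ M e^{Mt} k^β/N^2 for all t ≥ 0 and k ∈ [N]. -/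
import Mathlib
open Set Filter Real Topology

lemma aux_pow_add_one_le (x : ℝ) (hx : 0 ≤ x) :
    ∀ n : ℕ, (x + 1) ^ (n + 1) ≤ x ^ (n + 1) + (n + 1 : ℝ) * (x + 1) ^ n := by
  intro n
  induction n with
  | zero => simp
  | succ n ih =>
    have h2 : x ^ (n + 1) ≤ (x + 1) ^ (n + 1) := by
      apply pow_le_pow_left₀ hx; linarith
    have hx1 : (0:ℝ) ≤ x + 1 := by linarith
    calc (x + 1) ^ (n + 2) = (x + 1) ^ (n + 1) * (x + 1) := by ring
      _ ≤ (x ^ (n + 1) + (n + 1 : ℝ) * (x + 1) ^ n) * (x + 1) :=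
            mul_le_mul_of_nonneg_right ih hx1
      _ = x ^ (n + 2) + x ^ (n + 1) + (n + 1 : ℝ) * (x + 1) ^ (n + 1) := by ring
      _ ≤ x ^ (n + 1 + 1) + ((n:ℝ) + 1 + 1) * (x + 1) ^ (n + 1) := by linarith
      _ = x ^ (n + 1 + 1) + ((n + 1 : ℕ) + 1 : ℝ) * (x + 1) ^ (n + 1) := by push_cast; ring

lemma aux_transport (β : ℕ) (hβ : 1 ≤ β) (j : ℝ) (hj : 1 ≤ j) :
    j * ((j + 1) ^ β - j ^ β) ≤ (β : ℝ) * 2 ^ (β - 1) * j ^ β := by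
  obtain ⟨m, rfl⟩ := Nat.exists_eq_add_of_le hβ
  have h0 : (0:ℝ) ≤ j := by linarith
  have h1 := aux_pow_add_one_le j h0 m
  have h2 : (j + 1) ^ m ≤ 2 ^ m * j ^ m := by
    rw [← mul_pow]; apply pow_le_pow_left₀ (by linarith); linarith
  have h5 : (j + 1) ^ (m + 1) - j ^ (m + 1) ≤ ((m:ℝ) + 1) * (2 ^ m * j ^ m) := by
    have := mul_le_mul_of_nonneg_left h2 (show (0:ℝ) ≤ (m:ℝ) + 1 by positivity)
    linarith
  have h6 := mul_le_mul_of_nonneg_left h5 h0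
  have hm : (1 + m - 1) = m := by omega
  rw [show 1 + m = m + 1 from Nat.add_comm 1 m] at hm ⊢
  rw [hm]
  have h4 : j * (((m:ℝ) + 1) * (2 ^ m * j ^ m)) = ((m:ℝ) + 1) * 2 ^ m * j ^ (m + 1) := by ring
  rw [h4] at h6
  push_cast
  linarith

theorem discrete_transport_supersolution
    (β : ℕ) (hβ : 2 ≤ β) (c C0' C1 : ℝ) (hc : 0 ≤ c) (hC0' : 0 ≤ C0') (hC1 : 0 ≤ C1) :
    ∃ M > 0, ∀ N : ℕ, 2 ≤ N → ∀ z z' : ℕ → ℝ → ℝ,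
      (∀ k ∈ Finset.Icc 1 N, ∀ t : ℝ, 0 ≤ t → 0 ≤ z k t) →
      (∀ k ∈ Finset.Icc 1 N, ∀ t : ℝ, 0 ≤ t → HasDerivAt (fun s => z k s) (z' k t) t) →
      (∀ k ∈ Finset.Icc 1 N, ∀ t : ℝ, 0 ≤ t → ContinuousWithinAt (z' k) (Set.Ici 0) t) →
      (∀ k ∈ Finset.Icc 1 N, (k : ℝ) ≤ (N : ℝ) / 2 → ∀ t : ℝ, 0 ≤ t →
        z' k t ≤ c * z k t + c * (k : ℝ) * (z (k + 1) t - z k t)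
          + c * (k : ℝ) ^ β / (N : ℝ) ^ 2 + c / (N : ℝ) ^ 2) →
      (∀ k ∈ Finset.Icc 1 N, (k : ℝ) ≤ (N : ℝ) / 2 →
        z k 0 ≤ C0' * (k : ℝ) ^ 2 / (N : ℝ) ^ 2) →
      (∀ k ∈ Finset.Icc 1 N, (N : ℝ) / 2 < (k : ℝ) → ∀ t : ℝ, 0 ≤ t →
        z k t ≤ C1 * Real.exp (c * t) * (N : ℝ) ^ (β - 2)) →
      ∀ t : ℝ, 0 ≤ t → ∀ k ∈ Finset.Icc 1 N,
        z k t ≤ M * Real.exp (M * t) * (k : ℝ) ^ β / (N : ℝ) ^ 2 := by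
  classical
  have hD : (0:ℝ) ≤ (β:ℝ) * 2 ^ (β - 1) := by positivity
  have h2b : (0:ℝ) ≤ 2 ^ β * C1 := by positivity
  set M : ℝ := 1 + C0' + 2 ^ β * C1 + 3 * c + c * ((β:ℝ) * 2 ^ (β - 1)) with hMdef
  have hcD : (0:ℝ) ≤ c * ((β:ℝ) * 2 ^ (β - 1)) := mul_nonneg hc hD
  have hM1 : 1 ≤ M := by rw [hMdef]; linarith
  have hMpos : (0:ℝ) < M := by linarith
  have hcM : c ≤ M := by rw [hMdef]; linarith
  refine ⟨M, hMpos, ?_⟩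
  intro N hN z z' hpos hderiv hcont hineq hinit hbdry
  have hN0 : (0:ℝ) < (N:ℝ) := by positivity
  have hn2 : (0:ℝ) < (N:ℝ)^2 := by positivity
  -- the boundary regime bound, valid for all times
  have hbig : ∀ k ∈ Finset.Icc 1 N, (N:ℝ)/2 < (k:ℝ) → ∀ s : ℝ, 0 ≤ s →
      z k s ≤ M * Real.exp (M * s) * (k:ℝ) ^ β / (N:ℝ) ^ 2 := by
    intro k hk hhalf s hs
    have hk1 : 1 ≤ (k:ℝ) := by
      have := (Finset.mem_Icc.1 hk).1; exact_mod_cast this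
    have hNk : (N:ℝ) ≤ 2 * (k:ℝ) := by linarith
    have hNb : ((N:ℝ)) ^ (β - 2) = (N:ℝ) ^ β / (N:ℝ) ^ 2 := by
      rw [eq_div_iff (ne_of_gt hn2), ← pow_add, Nat.sub_add_cancel hβ]
    have hNpow : (N:ℝ) ^ β ≤ 2 ^ β * (k:ℝ) ^ β := by
      rw [← mul_pow]; exact pow_le_pow_left₀ (le_of_lt hN0) hNk β
    have hexp : Real.exp (c * s) ≤ Real.exp (M * s) :=
      Real.exp_le_exp.2 (mul_le_mul_of_nonneg_right hcM hs)
    have hE0 : (0:ℝ) < Real.exp (c * s) := Real.exp_pos _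
    have hE0' : (0:ℝ) < Real.exp (M * s) := Real.exp_pos _
    calc z k s ≤ C1 * Real.exp (c * s) * (N:ℝ) ^ (β - 2) := hbdry k hk hhalf s hs
      _ = C1 * Real.exp (c * s) * ((N:ℝ) ^ β / (N:ℝ) ^ 2) := by rw [hNb]
      _ ≤ C1 * Real.exp (M * s) * ((2 ^ β * (k:ℝ) ^ β) / (N:ℝ) ^ 2) := by
          gcongr
      _ = (2 ^ β * C1) * Real.exp (M * s) * (k:ℝ) ^ β / (N:ℝ) ^ 2 := by ring
      _ ≤ M * Real.exp (M * s) * (k:ℝ) ^ β / (N:ℝ) ^ 2 := by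
          have h1 : 2 ^ β * C1 ≤ M := by rw [hMdef]; linarith
          have h2 : (0:ℝ) ≤ Real.exp (M * s) * (k:ℝ) ^ β / (N:ℝ) ^ 2 := by positivity
          calc (2 ^ β * C1) * Real.exp (M * s) * (k:ℝ) ^ β / (N:ℝ) ^ 2
              = (2 ^ β * C1) * (Real.exp (M * s) * (k:ℝ) ^ β / (N:ℝ) ^ 2) := by ring
            _ ≤ M * (Real.exp (M * s) * (k:ℝ) ^ β / (N:ℝ) ^ 2) :=
                mul_le_mul_of_nonneg_right h1 h2
            _ = M * Real.exp (M * s) * (k:ℝ) ^ β / (N:ℝ) ^ 2 := by ring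
  intro t ht k hk
  by_cases hhalf : (N:ℝ)/2 < (k:ℝ)
  · exact hbig k hk hhalf t ht
  push_neg at hhalf
  -- the interior comparison via a maximum principle
  set I : Finset ℕ := (Finset.Icc 1 N).filter (fun j => (j:ℝ) ≤ (N:ℝ)/2) with hIdef
  have hkI : k ∈ I := Finset.mem_filter.2 ⟨hk, hhalf⟩
  have hIne : I.Nonempty := ⟨k, hkI⟩
  have hIset : ∀ j ∈ I, j ∈ Finset.Icc 1 N ∧ (j:ℝ) ≤ (N:ℝ)/2 := fun j hj =>
    Finset.mem_filter.1 hj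
  set u : ℕ → ℝ → ℝ := fun j s => z j s - M * Real.exp (M * s) * (j:ℝ) ^ β / (N:ℝ) ^ 2
    with hudef
  set f : ℝ → ℝ := fun s => I.sup' hIne (fun j => u j s) with hfdef
  suffices hft : f t ≤ 0 by
    have h1 : u k t ≤ f t := Finset.le_sup' (fun j => u j t) hkI
    have := h1.trans hft
    simp only [hudef] at this
    linarith
  -- derivative of the comparison function
  have hW : ∀ (j : ℕ) (x : ℝ), HasDerivAt
      (fun s => M * Real.exp (M * s) * (j:ℝ) ^ β / (N:ℝ) ^ 2)
      (M * (M * Real.exp (M * x) * (j:ℝ) ^ β / (N:ℝ) ^ 2)) x := by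
    intro j x
    have h1 : HasDerivAt (fun s : ℝ => M * s) M x := by
      simpa using (hasDerivAt_id x).const_mul M
    have h2 : HasDerivAt (fun s : ℝ => Real.exp (M * s)) (Real.exp (M * x) * M) x := h1.exp
    have h3 := (h2.const_mul M).mul_const ((j:ℝ) ^ β / (N:ℝ) ^ 2)
    have h4 : (fun s : ℝ => M * Real.exp (M * s) * (j:ℝ) ^ β / (N:ℝ) ^ 2)
        = fun s : ℝ => M * Real.exp (M * s) * ((j:ℝ) ^ β / (N:ℝ) ^ 2) := by
      funext s; ring
    have h5 : M * (M * Real.exp (M * x) * (j:ℝ) ^ β / (N:ℝ) ^ 2)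
        = M * (Real.exp (M * x) * M) * ((j:ℝ) ^ β / (N:ℝ) ^ 2) := by ring
    rw [h4, h5]
    exact h3
  set d : ℕ → ℝ → ℝ :=
    fun j x => z' j x - M * (M * Real.exp (M * x) * (j:ℝ) ^ β / (N:ℝ) ^ 2) with hddef
  have hud : ∀ j ∈ Finset.Icc 1 N, ∀ x : ℝ, 0 ≤ x → HasDerivAt (u j) (d j x) x := by
    intro j hj x hx
    exact (hderiv j hj x hx).sub (hW j x)
  -- key strict supersolution estimate at active indices
  have hkey : ∀ x : ℝ, 0 ≤ x → ∀ j ∈ I, u j x = 0 → (∀ i ∈ I, u i x ≤ 0) →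
      d j x ≤ -(1 / (N:ℝ) ^ 2) := by
    intro x hx j hjI hjact hall
    obtain ⟨hjIcc, hjhalf⟩ := hIset j hjI
    have hj1 : 1 ≤ (j:ℝ) := by
      have := (Finset.mem_Icc.1 hjIcc).1; exact_mod_cast this
    have hE1 : 1 ≤ Real.exp (M * x) :=
      Real.one_le_exp (mul_nonneg (le_of_lt hMpos) hx)
    have hP1 : 1 ≤ (j:ℝ) ^ β := one_le_pow₀ hj1
    -- z j x equals the supersolution
    have hzj : z j x = M * Real.exp (M * x) * (j:ℝ) ^ β / (N:ℝ) ^ 2 := by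
      have := hjact; simp only [hudef] at this; linarith
    -- z (j+1) x is dominated by the supersolution
    have hj1N : j + 1 ∈ Finset.Icc 1 N := by
      rw [Finset.mem_Icc]
      constructor
      · omega
      · have hN2 : (2:ℝ) ≤ (N:ℝ) := by exact_mod_cast hN
        have : ((j:ℝ) + 1) ≤ (N:ℝ) := by linarith
        have := this
        exact_mod_cast (by push_cast; linarith : ((j + 1 : ℕ):ℝ) ≤ (N:ℝ))
    have hzj1 : z (j + 1) x ≤ M * Real.exp (M * x) * ((j+1:ℕ):ℝ) ^ β / (N:ℝ) ^ 2 := by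
      by_cases hh : ((j+1:ℕ):ℝ) ≤ (N:ℝ)/2
      · have hmem : j + 1 ∈ I := Finset.mem_filter.2 ⟨hj1N, hh⟩
        have := hall (j + 1) hmem
        simp only [hudef] at this; linarith
      · push_neg at hh
        exact hbig (j + 1) hj1N hh x hx
    -- the differential inequality
    have h0 := hineq j hjIcc hjhalf x hx
    -- abbreviations
    set E := Real.exp (M * x) with hEdef
    set P := (j:ℝ) ^ β with hPdef
    set n2 := (N:ℝ) ^ 2 with hn2def
    have hn2' : (0:ℝ) < n2 := hn2
    have hQcast : ((j+1:ℕ):ℝ) ^ β = ((j:ℝ) + 1) ^ β := by push_cast; ring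
    -- transport estimate
    have htr : (j:ℝ) * (((j:ℝ) + 1) ^ β - P) ≤ (β:ℝ) * 2 ^ (β - 1) * P :=
      aux_transport β (by omega) (j:ℝ) hj1
    -- bound the coupling term
    have hcj : (0:ℝ) ≤ c * (j:ℝ) := mul_nonneg hc (by linarith)
    have hcoup : c * (j:ℝ) * (z (j + 1) x - z j x)
        ≤ c * ((β:ℝ) * 2 ^ (β - 1)) * (M * E * P / n2) := by
      have h1 : z (j + 1) x - z j x ≤ M * E * (((j:ℝ) + 1) ^ β - P) / n2 := by
        rw [hzj]
        have := hzj1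
        rw [hQcast] at this
        have heq : M * E * (((j:ℝ)+1) ^ β) / n2 - M * E * P / n2
            = M * E * (((j:ℝ) + 1) ^ β - P) / n2 := by ring
        linarith
      have h2 := mul_le_mul_of_nonneg_left h1 hcj
      have hMEn : (0:ℝ) ≤ c * (M * E / n2) := by positivity
      have h3 : c * (j:ℝ) * (M * E * (((j:ℝ) + 1) ^ β - P) / n2)
          = c * (M * E / n2) * ((j:ℝ) * (((j:ℝ) + 1) ^ β - P)) := by ring
      have h4 := mul_le_mul_of_nonneg_left htr hMEn
      calc c * (j:ℝ) * (z (j + 1) x - z j x)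
          ≤ c * (j:ℝ) * (M * E * (((j:ℝ) + 1) ^ β - P) / n2) := h2
        _ = c * (M * E / n2) * ((j:ℝ) * (((j:ℝ) + 1) ^ β - P)) := h3
        _ ≤ c * (M * E / n2) * ((β:ℝ) * 2 ^ (β - 1) * P) := h4
        _ = c * ((β:ℝ) * 2 ^ (β - 1)) * (M * E * P / n2) := by ring
    -- bound the source terms
    have hME1 : 1 ≤ M * E := by
      have h := mul_le_mul hM1 hE1 zero_le_one (le_trans zero_le_one hM1)
      linarith
    have hP0 : (0:ℝ) ≤ P := by positivity
    have hMEP : 1 ≤ M * E * P := by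
      have h := mul_le_mul hME1 hP1 zero_le_one (le_trans zero_le_one hME1)
      linarith
    have hPMEP : P ≤ M * E * P := by
      have h := mul_le_mul_of_nonneg_right hME1 hP0
      linarith
    have hS0 : (0:ℝ) ≤ M * E * P / n2 := by positivity
    have hS1 : (1:ℝ) / n2 ≤ M * E * P / n2 := (div_le_div_iff_of_pos_right hn2').2 hMEP
    have hSP : P / n2 ≤ M * E * P / n2 := (div_le_div_iff_of_pos_right hn2').2 hPMEP
    have hc1 : c * z j x = c * (M * E * P / n2) := by rw [hzj]
    have hc3 : c * P / n2 ≤ c * (M * E * P / n2) := by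
      have h := mul_le_mul_of_nonneg_left hSP hc
      calc c * P / n2 = c * (P / n2) := by ring
        _ ≤ c * (M * E * P / n2) := h
    have hc4 : c / n2 ≤ c * (M * E * P / n2) := by
      have h := mul_le_mul_of_nonneg_left hS1 hc
      calc c / n2 = c * (1 / n2) := by ring
        _ ≤ c * (M * E * P / n2) := h
    have hcoeff : 3 * c + c * ((β:ℝ) * 2 ^ (β - 1)) + 1 ≤ M := by rw [hMdef]; linarith
    have hfin := mul_le_mul_of_nonneg_right hcoeff hS0
    show d j x ≤ -(1 / (N:ℝ) ^ 2)
    simp only [hddef]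
    linarith
  -- continuity of f
  have hcontu : ∀ i ∈ I, ContinuousOn (u i) (Icc 0 t) := by
    intro i hi y hy
    exact (((hderiv i (hIset i hi).1 y hy.1).sub (hW i y)).continuousAt).continuousWithinAt
  have hcontf : ContinuousOn f (Icc 0 t) := by
    rw [hfdef]
    exact ContinuousOn.finset_sup'_apply hIne (fun i hi => hcontu i hi)
  -- the active set is nonempty
  have hAne : ∀ x : ℝ, (I.filter (fun i => u i x = f x)).Nonempty := by
    intro x
    obtain ⟨i, hi, he⟩ := Finset.exists_mem_eq_sup' hIne (fun i => u i x)
    exact ⟨i, Finset.mem_filter.2 ⟨hi, he.symm⟩⟩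
  set F' : ℝ → ℝ :=
    fun x => (I.filter (fun i => u i x = f x)).sup' (hAne x) (fun i => d i x) with hF'def
  -- the liminf right slope of f is bounded by F'
  have hf' : ∀ x ∈ Ico 0 t, ∀ r, F' x < r → ∃ᶠ y in 𝓝[>] x, slope f x y < r := by
    intro x hx r hr
    have hx0 : (0:ℝ) ≤ x := hx.1
    have hmono : 𝓝[>] x ≤ 𝓝[≠] x := by
      apply nhdsWithin_mono
      intro y hy
      simp only [Set.mem_compl_iff, Set.mem_singleton_iff]
      exact ne_of_gt hy
    have hev : ∀ i ∈ I, ∀ᶠ y in 𝓝[>] x, u i y < f x + r * (y - x) := by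
      intro i hi
      by_cases hact : u i x = f x
      · have hiA : i ∈ I.filter (fun i' => u i' x = f x) := Finset.mem_filter.2 ⟨hi, hact⟩
        have hdi : d i x < r :=
          lt_of_le_of_lt (Finset.le_sup' (fun i' => d i' x) hiA) hr
        have hsl : Tendsto (slope (u i) x) (𝓝[≠] x) (𝓝 (d i x)) :=
          hasDerivAt_iff_tendsto_slope.1 (hud i (hIset i hi).1 x hx0)
        have h1 : ∀ᶠ y in 𝓝[≠] x, slope (u i) x y < r := hsl.eventually_lt_const hdi
        have h2 : ∀ᶠ y in 𝓝[>] x, slope (u i) x y < r :=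
          Filter.Eventually.filter_mono hmono h1
        filter_upwards [h2, self_mem_nhdsWithin] with y hy1 hy2
        have hyx : 0 < y - x := sub_pos.2 hy2
        rw [slope_def_field, div_lt_iff₀ hyx] at hy1
        linarith
      · have hlt : u i x < f x :=
          lt_of_le_of_ne (Finset.le_sup' (fun i' => u i' x) hi) hact
        have hc1 : ContinuousAt (fun y => u i y - f x - r * (y - x)) x := by
          have h1 : ContinuousAt (u i) x :=
            ((hderiv i (hIset i hi).1 x hx0).sub (hW i x)).continuousAt
          exact (h1.sub continuousAt_const).sub
            (continuousAt_const.mul ((continuousAt_id).sub continuousAt_const))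
        have h2 : u i x - f x - r * (x - x) < 0 := by
          rw [sub_self, mul_zero]; linarith
        have h3 : ∀ᶠ y in 𝓝 x, u i y - f x - r * (y - x) < 0 :=
          Filter.Tendsto.eventually_lt_const h2 hc1
        have h4 : ∀ᶠ y in 𝓝[>] x, u i y - f x - r * (y - x) < 0 :=
          Filter.Eventually.filter_mono nhdsWithin_le_nhds h3
        filter_upwards [h4] with y hy
        linarith
    have hev2 := (I.eventually_all).2 hev
    have hev3 : ∀ᶠ y in 𝓝[>] x, slope f x y < r := by
      filter_upwards [hev2, self_mem_nhdsWithin] with y h1 h2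
      have hyx : 0 < y - x := sub_pos.2 h2
      have hfy : f y < f x + r * (y - x) := by
        rw [hfdef]
        exact (Finset.sup'_lt_iff hIne).2 (fun i hi => h1 i hi)
      rw [slope_def_field, div_lt_iff₀ hyx]
      linarith
    exact hev3.frequently
  -- strict decrease on the contact set
  have hbound : ∀ x ∈ Ico (0:ℝ) t, f x = 0 → F' x < 0 := by
    intro x hx hfx
    rw [hF'def]
    apply (Finset.sup'_lt_iff (hAne x)).2
    intro i hiA
    obtain ⟨hiI, hact⟩ := Finset.mem_filter.1 hiA
    have hall : ∀ i' ∈ I, u i' x ≤ 0 := fun i' hi' =>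
      (Finset.le_sup' (fun i'' => u i'' x) hi').trans (le_of_eq hfx)
    have hk1 := hkey x hx.1 i hiI (by rw [hact, hfx]) hall
    have hpos2 : (0:ℝ) < 1 / (N:ℝ) ^ 2 := by positivity
    exact lt_of_le_of_lt hk1 (neg_lt_zero.2 hpos2)
  -- initial condition
  have ha0 : f 0 ≤ 0 := by
    rw [hfdef]
    apply Finset.sup'_le
    intro i hi
    obtain ⟨hiIcc, hihalf⟩ := hIset i hi
    have hi1 : 1 ≤ (i:ℝ) := by exact_mod_cast (Finset.mem_Icc.1 hiIcc).1
    have h1 := hinit i hiIcc hihalf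
    have h2 : (i:ℝ) ^ 2 ≤ (i:ℝ) ^ β := pow_le_pow_right₀ hi1 hβ
    have h3 : C0' ≤ M := by rw [hMdef]; linarith
    have h4 : C0' * (i:ℝ) ^ 2 ≤ M * (i:ℝ) ^ β :=
      mul_le_mul h3 h2 (by positivity) (by linarith)
    have h5 : C0' * (i:ℝ) ^ 2 / (N:ℝ) ^ 2 ≤ M * (i:ℝ) ^ β / (N:ℝ) ^ 2 :=
      (div_le_div_iff_of_pos_right hn2).2 h4
    have h6 : Real.exp (M * 0) = 1 := by rw [mul_zero, Real.exp_zero]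
    simp only [hudef, h6]
    have h7 : M * 1 * (i:ℝ) ^ β / (N:ℝ) ^ 2 = M * (i:ℝ) ^ β / (N:ℝ) ^ 2 := by ring
    rw [h7]
    linarith
  -- apply the fencing theorem
  have happ := image_le_of_liminf_slope_right_lt_deriv_boundary (f := f) (f' := F')
    (a := 0) (b := t) (B := fun _ => (0:ℝ)) (B' := fun _ => (0:ℝ))
    hcontf hf' ha0 (fun x => hasDerivAt_const x 0) (fun x hx hfx => hbound x hx hfx)
  exact happ ⟨ht, le_refl t⟩
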